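/- arXiv:2103.02384 — 6 statements merged into one kernel-verified Lean document; each statement's English description precedes it below -/
import Mathlib

section
/- Theorem 2: Let B be a set of boundary conditions for Dom and G (with n ≥ 1 goals) that is contrastive, i.e., any two distinct elements of B are contrastive. Then for any two distinct φ, ψ ∈ B, φ does not imply ψ and ψ does not imply φ (neither predicate's model set is contained in the other's). -/
/-- The conjunction of all goals, semantically. -/
def GoalConj {W : Type*} {n : ℕ} (G : Fin n → W → Prop) (w : W) : Prop :=
  ∀ i, G i w

/-- The conjunction of all goals except the `i`-th one. -/
def GoalsExcept {W : Type*} {n : ℕ} (G : Fin n → W → Prop) (i : Fin n) (w : W) : Prop :=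
  ∀ j, j ≠ i → G j w

/-- `φ` is a boundary condition for domain `Dom` and goals `G`:
logical inconsistency, minimality, and non-triviality. -/
def IsBC {W : Type*} {n : ℕ} (Dom : W → Prop) (G : Fin n → W → Prop) (φ : W → Prop) : Prop :=
  (¬ ∃ w, Dom w ∧ GoalConj G w ∧ φ w) ∧
  (∀ i : Fin n, ∃ w, Dom w ∧ GoalsExcept G i w ∧ φ w) ∧
  ¬ (∀ w, φ w ↔ ¬ GoalConj G w)

/-- `f` is a witness of the BC `φ` iff `φ ∧ ¬ f` is not a BC. -/
def IsWitness {W : Type*} {n : ℕ} (Dom : W → Prop) (G : Fin n → W → Prop)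
    (φ f : W → Prop) : Prop :=
  ¬ IsBC Dom G (fun w => φ w ∧ ¬ f w)

/-- Two BCs are contrastive iff neither is a witness of the other. -/
def Contrastive {W : Type*} {n : ℕ} (Dom : W → Prop) (G : Fin n → W → Prop)
    (φ ψ : W → Prop) : Prop :=
  ¬ IsWitness Dom G ψ φ ∧ ¬ IsWitness Dom G φ ψ

/-- Theorem 2: in a contrastive set of BCs, no BC implies another. -/
theorem contrastive_set_no_implication {W : Type*} {n : ℕ} (hn : 1 ≤ n)
    (Dom : W → Prop) (G : Fin n → W → Prop) (B : Set (W → Prop))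
    (hBC : ∀ φ ∈ B, IsBC Dom G φ)
    (hcon : ∀ φ ∈ B, ∀ ψ ∈ B, φ ≠ ψ → Contrastive Dom G φ ψ) :
    ∀ φ ∈ B, ∀ ψ ∈ B, φ ≠ ψ →
      (¬ ∀ w, φ w → ψ w) ∧ (¬ ∀ w, ψ w → φ w) := by
  intro φ hφ ψ hψ hne
  obtain ⟨h1, h2⟩ := hcon φ hφ ψ hψ hne
  have bc1 : IsBC Dom G (fun w => ψ w ∧ ¬ φ w) := not_not.mp h1
  have bc2 : IsBC Dom G (fun w => φ w ∧ ¬ ψ w) := not_not.mp h2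
  have i0 : Fin n := ⟨0, hn⟩
  obtain ⟨w1, _, _, hw1⟩ := bc1.2.1 i0
  obtain ⟨w2, _, _, hw2⟩ := bc2.2.1 i0
  exact ⟨fun h => hw2.2 (h w2 hw2.1), fun h => hw1.2 (h w1 hw1.1)⟩
end

section
/- Theorem 3 (contrastive BCs capture different divergences): If φ and ψ are contrastive boundary conditions for Dom and G (with n ≥ 1 goals), then there exists a model w with φ w ∧ ¬ ψ w and there exists a model w' with ψ w' ∧ ¬ φ w'. -/
/-- Theorem 3: contrastive BCs capture different divergences. -/
theorem contrastive_different_divergences {W : Type*} {n : ℕ} (hn : 1 ≤ n)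
    (Dom : W → Prop) (G : Fin n → W → Prop) (φ ψ : W → Prop)
    (hφ : IsBC Dom G φ) (hψ : IsBC Dom G ψ)
    (hcon : Contrastive Dom G φ ψ) :
    (∃ w, φ w ∧ ¬ ψ w) ∧ (∃ w', ψ w' ∧ ¬ φ w') := by
  obtain ⟨h1, h2⟩ := hcon
  have b1 : IsBC Dom G (fun w => ψ w ∧ ¬ φ w) := not_not.mp h1
  have b2 : IsBC Dom G (fun w => φ w ∧ ¬ ψ w) := not_not.mp h2
  have i0 : Fin n := ⟨0, hn⟩
  obtain ⟨w, _, _, hw⟩ := b2.2.1 i0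
  obtain ⟨w', _, _, hw'⟩ := b1.2.1 i0
  exact ⟨⟨w, hw⟩, ⟨w', hw'⟩⟩
end

section
/- Theorem 5 (BC termination condition): If there exists an index i such that no model w satisfies Dom w ∧ GoalsExcept i w ∧ ¬ (G i w), then there is no boundary condition for Dom and G. -/
/-- Theorem 5 (BC termination condition). -/
theorem bc_termination {W : Type*} {n : ℕ} (hn : 1 ≤ n)
    (Dom : W → Prop) (G : Fin n → W → Prop)
    (h : ∃ i : Fin n, ¬ ∃ w, Dom w ∧ GoalsExcept G i w ∧ ¬ G i w) :
    ¬ ∃ φ : W → Prop, IsBC Dom G φ := by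
  rintro ⟨φ, hinc, hmin, _⟩
  obtain ⟨i, hi⟩ := h
  obtain ⟨w, hd, he, hφ⟩ := hmin i
  have hgi : G i w := by
    by_contra hg
    exact hi ⟨w, hd, he, hg⟩
  exact hinc ⟨w, hd, fun j => by
    by_cases hj : j = i
    · exact hj ▸ hgi
    · exact he j hj, hφ⟩
end

section
/- Theorem 6: Let B be a finite set of predicates on W, each of which is a boundary condition for Dom and G, and define the augmented domain Dom' : W → Prop by Dom' w := Dom w ∧ ∀ ψ ∈ B, ¬ ψ w. If φ is a boundary condition for Dom' and G, then φ is a boundary condition for Dom and G. -/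
/-- Theorem 6: a BC under the augmented domain is a BC under the original domain. -/
theorem bc_of_augmented_is_bc {W : Type*} {n : ℕ} (hn : 1 ≤ n)
    (Dom : W → Prop) (G : Fin n → W → Prop) (B : Finset (W → Prop))
    (hBC : ∀ ψ ∈ B, IsBC Dom G ψ) (φ : W → Prop)
    (hφ : IsBC (fun w => Dom w ∧ ∀ ψ ∈ B, ¬ ψ w) G φ) :
    IsBC Dom G φ := by
  obtain ⟨h1, h2, h3⟩ := hφ
  refine ⟨?_, ?_, h3⟩
  · rintro ⟨w, hD, hG, hφw⟩
    exact h1 ⟨w, ⟨hD, fun ψ hψ hψw => (hBC ψ hψ).1 ⟨w, hD, hG, hψw⟩⟩, hG, hφw⟩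
  · intro i
    obtain ⟨w, ⟨hD, _⟩, hGE, hφw⟩ := h2 i
    exact ⟨w, hD, hGE, hφw⟩
end

section
/- Theorem 7: Let B be a finite set of predicates on W, each of which is a boundary condition for Dom and G (with n ≥ 1 goals), and define Dom' w := Dom w ∧ ∀ ψ ∈ B, ¬ ψ w. If φ is a boundary condition for Dom' and G, then for every ψ ∈ B, the predicate fun w => φ w ∧ ¬ ψ w is a boundary condition for Dom and G; consequently, no ψ ∈ B is a witness of φ (with respect to Dom and G). -/
/-- Theorem 7: a BC of the augmented domain differs from every blocked BC,
and no blocked BC is a witness of it. -/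
theorem bc_of_augmented_not_witnessed {W : Type*} {n : ℕ} (hn : 1 ≤ n)
    (Dom : W → Prop) (G : Fin n → W → Prop) (B : Finset (W → Prop))
    (hBC : ∀ ψ ∈ B, IsBC Dom G ψ) (φ : W → Prop)
    (hφ : IsBC (fun w => Dom w ∧ ∀ ψ ∈ B, ¬ ψ w) G φ) :
    ∀ ψ ∈ B, IsBC Dom G (fun w => φ w ∧ ¬ ψ w) ∧ ¬ IsWitness Dom G φ ψ := by
  intro ψ hψ
  obtain ⟨hinc, hmin, _⟩ := hφ
  have key : IsBC Dom G (fun w => φ w ∧ ¬ ψ w) := by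
    refine ⟨?_, ?_, ?_⟩
    · rintro ⟨w, hD, hG, hφw, hψw⟩
      exact hinc ⟨w, ⟨hD, fun ψ' hψ' hw' =>
        (hBC ψ' hψ').1 ⟨w, hD, hG, hw'⟩⟩, hG, hφw⟩
    · intro i
      obtain ⟨w, ⟨hD, hB⟩, hGE, hφw⟩ := hmin i
      exact ⟨w, hD, hGE, hφw, hB ψ hψ⟩
    · intro h
      obtain ⟨hψinc, hψmin, _⟩ := hBC ψ hψ
      obtain ⟨w, hD, hGE, hψw⟩ := hψmin ⟨0, hn⟩
      have hnG : ¬ GoalConj G w := fun hG => hψinc ⟨w, hD, hG, hψw⟩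
      exact ((h w).mpr hnG).2 hψw
  exact ⟨key, fun hw => hw key⟩
end

section
/- Theorem 8 (soundness of the joint framework, sequence form): Let φ₁, …, φₘ be predicates on W such that for every j ≤ m, φⱼ is a boundary condition for the augmented domain fun w => Dom w ∧ ∀ i < j, ¬ φᵢ w (together with goals G, n ≥ 1). Then every φⱼ is a boundary condition for the original Dom and G, and for all i < j, the predicate fun w => φⱼ w ∧ ¬ φᵢ w is a boundary condition for Dom and G (so no earlier φᵢ is a witness of a later φⱼ). -/
/-- Theorem 8 (soundness of the joint framework, sequence form). -/
theorem joint_framework_sound {W : Type*} {n : ℕ} (hn : 1 ≤ n)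
    (Dom : W → Prop) (G : Fin n → W → Prop) (m : ℕ) (φ : Fin m → W → Prop)
    (hφ : ∀ j : Fin m, IsBC (fun w => Dom w ∧ ∀ i < j, ¬ φ i w) G (φ j)) :
    (∀ j : Fin m, IsBC Dom G (φ j)) ∧
    (∀ i j : Fin m, i < j → IsBC Dom G (fun w => φ j w ∧ ¬ φ i w)) := by
  have key : ∀ k : ℕ, ∀ j : Fin m, j.val < k → ∀ w, Dom w → GoalConj G w → φ j w → False := by
    intro k
    induction k with
    | zero => intro j h; exact absurd h (Nat.not_lt_zero _)
    | succ k ih =>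
      intro j hjk w hD hG hφj
      by_cases h : ∀ i < j, ¬ φ i w
      · exact (hφ j).1 ⟨w, ⟨hD, h⟩, hG, hφj⟩
      · push_neg at h
        obtain ⟨i, hij, hφi⟩ := h
        exact ih i (by omega : i.val < k) w hD hG hφi
  have incons : ∀ j : Fin m, ∀ w, Dom w → GoalConj G w → φ j w → False :=
    fun j => key (j.val + 1) j (Nat.lt_succ_self _)
  have bc : ∀ j : Fin m, IsBC Dom G (φ j) := by
    intro j
    refine ⟨fun ⟨w, hD, hG, hφj⟩ => incons j w hD hG hφj, ?_, (hφ j).2.2⟩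
    intro i
    obtain ⟨w, ⟨hD, _⟩, hGE, hφj⟩ := (hφ j).2.1 i
    exact ⟨w, hD, hGE, hφj⟩
  refine ⟨bc, fun i j hij => ?_⟩
  refine ⟨fun ⟨w, hD, hG, hφj, _⟩ => incons j w hD hG hφj, ?_, ?_⟩
  · intro k
    obtain ⟨w, ⟨hD, hnot⟩, hGE, hφj⟩ := (hφ j).2.1 k
    exact ⟨w, hD, hGE, hφj, hnot i hij⟩
  · intro hiff
    obtain ⟨w, hD, hGE, hφi⟩ := (bc i).2.1 ⟨0, hn⟩
    have hnG : ¬ GoalConj G w := fun hG => incons i w hD hG hφi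
    exact ((hiff w).mpr hnG).2 hφi
end
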